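/- (Gradient of the group fairness discrepancy with respect to sample weights.) For each training index i, the partial derivative at ε = 0 of the group discrepancy ε ↦ (1/|J₀|)·Σ_{j∈J₀} F_j(θ(ε)) − (1/|J₁|)·Σ_{j'∈J₁} G_{j'}(θ(ε)) in the i-th coordinate equals ⟨ (1/|J₁|)·Σ_{j'∈J₁} ∇G_{j'}(θ*) − (1/|J₀|)·Σ_{j∈J₀} ∇F_j(θ*), H⁻¹(∇ℓ_i(θ*)) ⟩. -/

import Mathlib

open scoped BigOperators

section Aux
variable {E : Type*} [NormedAddCommGroup E] [InnerProductSpace ℝ E] [CompleteSpace E]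

lemma aux_grad_differentiable {f : E → ℝ} (hf : ContDiff ℝ 2 f) :
    Differentiable ℝ (gradient f) := by
  have h1 : ContDiff ℝ 1 (fderiv ℝ f) := hf.fderiv_right (by norm_num)
  have h2 : gradient f = fun x => (InnerProductSpace.toDual ℝ E).symm (fderiv ℝ f x) := rfl
  rw [h2]
  exact ((InnerProductSpace.toDual ℝ E).symm.toContinuousLinearEquiv.differentiable).comp
    (h1.differentiable one_ne_zero)

lemma aux_grad_combo {ι : Type*} [Fintype ι] (c : ℝ) (f : ι → E → ℝ)
    (hf : ∀ k, Differentiable ℝ (f k)) (x : E) :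
    gradient (fun w => c * ∑ k, f k w) x = c • ∑ k, gradient (f k) x := by
  have hfd : HasFDerivAt (fun w => c * ∑ k, f k w)
      (c • ∑ k, fderiv ℝ (f k) x) x :=
    (HasFDerivAt.fun_sum (fun k _ => ((hf k) x).hasFDerivAt)).const_mul c
  have h3 : gradient (fun w => c * ∑ k, f k w) x
      = (InnerProductSpace.toDual ℝ E).symm (c • ∑ k, fderiv ℝ (f k) x) := by
    rw [gradient, hfd.fderiv]
  rw [h3, map_smul, map_sum]
  rfl

lemma aux_inner_grad {f : E → ℝ} (x : E) (u : E) :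
    fderiv ℝ f x u = @inner ℝ E _ (gradient f x) u := by
  rw [gradient, InnerProductSpace.toDual_symm_apply]

end Aux

/-- gradient of the group fairness discrepancy w.r.t. sample weights:
under the multivariate influence-function setting, for each training index `i`, the
partial derivative at `ε = 0` of the group discrepancy
`ε ↦ (1/|J₀|)·Σ_{j∈J₀} F_j(θ(ε)) − (1/|J₁|)·Σ_{j'∈J₁} G_{j'}(θ(ε))`
in the `i`-th coordinate equals
`⟨(1/|J₁|)·Σ_{j'} ∇G_{j'}(θ*) − (1/|J₀|)·Σ_j ∇F_j(θ*), H⁻¹(∇ℓᵢ(θ*))⟩`. -/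
theorem fairness_discrepancy_gradient
    {E : Type*} [NormedAddCommGroup E] [InnerProductSpace ℝ E] [FiniteDimensional ℝ E]
    (n : ℕ) (hn : 1 ≤ n) (ℓ : Fin n → E → ℝ) (hℓ : ∀ i, ContDiff ℝ 2 (ℓ i))
    (θ : (Fin n → ℝ) → E) (θs : E) (hθ0 : θ 0 = θs) (hθ : DifferentiableAt ℝ θ 0)
    (H : E ≃L[ℝ] E)
    (hH : (H : E →L[ℝ] E) =
      fderiv ℝ (gradient (fun w => (1 / n : ℝ) * ∑ i, ℓ i w)) θs)
    (hcrit : ∀ᶠ ε in nhds (0 : Fin n → ℝ),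
      ∑ i, ((1 / n : ℝ) + ε i) • gradient (ℓ i) (θ ε) = 0)
    (J0 J1 : Type*) [Fintype J0] [Fintype J1] [Nonempty J0] [Nonempty J1]
    (F : J0 → E → ℝ) (G : J1 → E → ℝ)
    (hF : ∀ j, DifferentiableAt ℝ (F j) θs) (hG : ∀ j', DifferentiableAt ℝ (G j') θs)
    (i : Fin n) :
    fderiv ℝ
      (fun ε => (1 / (Fintype.card J0) : ℝ) * ∑ j, F j (θ ε)
        - (1 / (Fintype.card J1) : ℝ) * ∑ j', G j' (θ ε)) 0 (Pi.single i 1) =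
      @inner ℝ E _
        ((1 / (Fintype.card J1) : ℝ) • ∑ j', gradient (G j') θs
          - (1 / (Fintype.card J0) : ℝ) • ∑ j, gradient (F j) θs)
        (H.symm (gradient (ℓ i) θs)) := by
  subst hθ0
  set D := fderiv ℝ θ 0 with hDdef
  have hD : HasFDerivAt θ D 0 := hθ.hasFDerivAt
  set v : Fin n → ℝ := Pi.single i 1 with hv
  have hgd : ∀ k : Fin n, Differentiable ℝ (gradient (ℓ k)) :=
    fun k => aux_grad_differentiable (hℓ k)
  -- derivative of the weighted stationarity map
  have hΦ : HasFDerivAt (fun ε : Fin n → ℝ => ∑ k, ((1 / n : ℝ) + ε k) • gradient (ℓ k) (θ ε))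
      (∑ k, (((1 / n : ℝ) + (0 : Fin n → ℝ) k) • ((fderiv ℝ (gradient (ℓ k)) (θ 0)).comp D)
        + (ContinuousLinearMap.proj k : (Fin n → ℝ) →L[ℝ] ℝ).smulRight
            (gradient (ℓ k) (θ 0)))) 0 := by
    apply HasFDerivAt.fun_sum
    intro k _
    have hc : HasFDerivAt (fun ε : Fin n → ℝ => (1 / n : ℝ) + ε k)
        (ContinuousLinearMap.proj k : (Fin n → ℝ) →L[ℝ] ℝ) 0 := by
      simpa using (hasFDerivAt_const (1 / n : ℝ) (0 : Fin n → ℝ)).fun_add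
        ((ContinuousLinearMap.proj k : (Fin n → ℝ) →L[ℝ] ℝ).hasFDerivAt)
    exact hc.smul (((hgd k) (θ 0)).hasFDerivAt.comp 0 hD)
  have hΦ0 : HasFDerivAt (fun _ : Fin n → ℝ => (0 : E))
      (∑ k, (((1 / n : ℝ) + (0 : Fin n → ℝ) k) • ((fderiv ℝ (gradient (ℓ k)) (θ 0)).comp D)
        + (ContinuousLinearMap.proj k : (Fin n → ℝ) →L[ℝ] ℝ).smulRight
            (gradient (ℓ k) (θ 0)))) 0 :=
    hΦ.congr_of_eventuallyEq (Filter.EventuallyEq.symm hcrit)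
  have hzero : (∑ k, (((1 / n : ℝ) + (0 : Fin n → ℝ) k) • ((fderiv ℝ (gradient (ℓ k)) (θ 0)).comp D)
        + (ContinuousLinearMap.proj k : (Fin n → ℝ) →L[ℝ] ℝ).smulRight
            (gradient (ℓ k) (θ 0)))) = 0 :=
    hΦ0.unique (hasFDerivAt_const (0 : E) (0 : Fin n → ℝ))
  -- H as sum of hessians
  have hHeq : (H : E →L[ℝ] E) = (1 / n : ℝ) • ∑ k, fderiv ℝ (gradient (ℓ k)) (θ 0) := by
    rw [hH]
    have h1 : gradient (fun w => (1 / n : ℝ) * ∑ k, ℓ k w)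
        = fun x => (1 / n : ℝ) • ∑ k, gradient (ℓ k) x :=
      funext fun x => aux_grad_combo _ _ (fun k => (hℓ k).differentiable two_ne_zero) x
    rw [h1]
    exact ((HasFDerivAt.fun_sum (fun k (_ : k ∈ Finset.univ) =>
      ((hgd k) (θ 0)).hasFDerivAt)).const_smul ((1 : ℝ) / n)).fderiv
  -- evaluate hzero at v
  have hkey : (H : E →L[ℝ] E) (D v) + gradient (ℓ i) (θ 0) = 0 := by
    have h := congrArg (fun T : (Fin n → ℝ) →L[ℝ] E => T v) hzero
    simp only [ContinuousLinearMap.sum_apply, ContinuousLinearMap.add_apply,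
      ContinuousLinearMap.smul_apply, ContinuousLinearMap.comp_apply,
      ContinuousLinearMap.smulRight_apply, ContinuousLinearMap.proj_apply,
      ContinuousLinearMap.zero_apply, Pi.zero_apply, add_zero] at h
    have hsingle : ∑ k, v k • gradient (ℓ k) (θ 0) = gradient (ℓ i) (θ 0) := by
      rw [hv]
      simp [Pi.single_apply, ite_smul]
    rw [Finset.sum_add_distrib, hsingle] at h
    rw [hHeq]
    simpa [ContinuousLinearMap.smul_apply, ContinuousLinearMap.sum_apply,
      Finset.smul_sum] using h
  have hDv : D v = - H.symm (gradient (ℓ i) (θ 0)) := by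
    have h2 : (H : E →L[ℝ] E) (D v) = - gradient (ℓ i) (θ 0) :=
      eq_neg_of_add_eq_zero_left hkey
    calc D v = H.symm ((H : E →L[ℝ] E) (D v)) := (H.symm_apply_apply _).symm
      _ = - H.symm (gradient (ℓ i) (θ 0)) := by rw [h2, map_neg]
  have hmain : HasFDerivAt
      (fun ε => (1 / (Fintype.card J0) : ℝ) * ∑ j, F j (θ ε)
        - (1 / (Fintype.card J1) : ℝ) * ∑ j', G j' (θ ε))
      ((1 / (Fintype.card J0) : ℝ) • ∑ j, (fderiv ℝ (F j) (θ 0)).comp D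
        - (1 / (Fintype.card J1) : ℝ) • ∑ j', (fderiv ℝ (G j') (θ 0)).comp D) 0 :=
    ((HasFDerivAt.fun_sum fun j (_ : j ∈ Finset.univ) =>
        (hF j).hasFDerivAt.comp 0 hD).const_mul _).sub
      ((HasFDerivAt.fun_sum fun j' (_ : j' ∈ Finset.univ) =>
        (hG j').hasFDerivAt.comp 0 hD).const_mul _)
  rw [hmain.fderiv]
  simp only [ContinuousLinearMap.sub_apply, ContinuousLinearMap.smul_apply,
    ContinuousLinearMap.sum_apply, ContinuousLinearMap.comp_apply, aux_inner_grad, hDv,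
    inner_neg_right, inner_sub_left, sum_inner, real_inner_smul_left, smul_eq_mul,
    Finset.sum_neg_distrib, mul_neg]
  ring
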